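/- Let r > 0, v > 0 and Δ > 1 + r be real numbers, and define 𝓛(f) = v·f·(1+r)·(2Δ − (r+2)·√(1+f))/Δ for f ≥ 0. Then there exists a threshold f̄ > 0 such that 𝓛 is strictly increasing on the interval [0, f̄] and strictly decreasing on the interval [f̄, ∞). -/

import Mathlib

/-- Lemma 1 (liquidity yield hump shape): for `r > 0`, `v > 0` and `Δ > 1 + r`, there is a
threshold fee `f̄ > 0` such that the liquidity yield
`𝓛(f) = v·f·(1+r)·(2Δ − (r+2)·√(1+f))/Δ` is strictly increasing on `[0, f̄]` and
strictly decreasing on `[f̄, ∞)`. -/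
theorem liquidity_yield_increasing_then_decreasing
    (r v Δ : ℝ) (hr : 0 < r) (hv : 0 < v) (hΔ : 1 + r < Δ) :
    ∃ fbar : ℝ, 0 < fbar ∧
      StrictMonoOn (fun f : ℝ => v * f * (1 + r) * (2 * Δ - (r + 2) * Real.sqrt (1 + f)) / Δ)
        (Set.Icc 0 fbar) ∧
      StrictAntiOn (fun f : ℝ => v * f * (1 + r) * (2 * Δ - (r + 2) * Real.sqrt (1 + f)) / Δ)
        (Set.Ici fbar) := by
  have hΔ0 : 0 < Δ := by linarith
  have hr2 : 0 < r + 2 := by linarith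
  set w : ℝ := Real.sqrt (4*Δ^2 + 3*(r+2)^2) with hw
  have hw0 : 0 < w := Real.sqrt_pos.mpr (by positivity)
  have hw2 : w^2 = 4*Δ^2 + 3*(r+2)^2 := Real.sq_sqrt (by positivity)
  have h2Δw : 2*Δ < w := by nlinarith [hw2, hw0]
  set sbar : ℝ := (2*Δ + w)/(3*(r+2)) with hsbar
  have hsbar1 : 1 < sbar := by
    rw [hsbar, lt_div_iff₀ (by linarith)]
    nlinarith [hw2, hw0]
  have hsbar0 : 0 < sbar := by linarith
  -- sign of the quadratic h(s) = -3(r+2)s² + 4Δs + (r+2)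
  have hpos : ∀ s : ℝ, 0 < s → s < sbar → 0 < -3*(r+2)*s^2 + 4*Δ*s + (r+2) := by
    intro s hs0 hs
    rw [hsbar, lt_div_iff₀ (by linarith)] at hs
    have hA : 0 < 2*Δ + w - 3*(r+2)*s := by linarith
    have hB : 0 < w - 2*Δ + 3*(r+2)*s := by nlinarith
    nlinarith [mul_pos hA hB, hw2]
  have hneg : ∀ s : ℝ, sbar < s → -3*(r+2)*s^2 + 4*Δ*s + (r+2) < 0 := by
    intro s hs
    rw [hsbar, div_lt_iff₀ (by linarith)] at hs
    have hA : 0 < 3*(r+2)*s - 2*Δ - w := by linarith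
    have hB : 0 < 3*(r+2)*s - 2*Δ + w := by linarith
    nlinarith [mul_pos hA hB, hw2]
  -- derivative of the yield at any f > 0
  have hderiv : ∀ f : ℝ, 0 < f →
      HasDerivAt (fun f : ℝ => v * f * (1 + r) * (2 * Δ - (r + 2) * Real.sqrt (1 + f)) / Δ)
        (v*(1+r)/Δ * ((-3*(r+2)*(Real.sqrt (1+f))^2 + 4*Δ*(Real.sqrt (1+f)) + (r+2))
          / (2*Real.sqrt (1+f)))) f := by
    intro f hf
    have h1f : (0:ℝ) < 1 + f := by linarith
    set s : ℝ := Real.sqrt (1+f) with hsdef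
    have hs0 : 0 < s := Real.sqrt_pos.mpr h1f
    have hs2 : s^2 = 1 + f := Real.sq_sqrt h1f.le
    have hd1 : HasDerivAt (fun x : ℝ => Real.sqrt (1+x)) (1/(2*s)) f := by
      have hinner : HasDerivAt (fun x : ℝ => 1 + x) 1 f := by
        simpa using (hasDerivAt_id f).const_add (1:ℝ)
      have := (Real.hasDerivAt_sqrt h1f.ne').comp f hinner
      exact this.congr_deriv (by simp [hsdef])
    have hd2 : HasDerivAt (fun x : ℝ => 2*Δ - (r+2)*Real.sqrt (1+x))
        (-((r+2)*(1/(2*s)))) f := (hd1.const_mul (r+2)).const_sub (2*Δ)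
    have hd3 : HasDerivAt (fun x : ℝ => v * x * (1+r)) (v*(1+r)) f := by
      simpa using ((hasDerivAt_id f).const_mul v).mul_const (1+r)
    have hd5 := (hd3.mul hd2).div_const Δ
    refine HasDerivAt.congr_deriv hd5 ?_
    rw [show f = s^2 - 1 by linarith]
    field_simp
    rw [show 1 + (s^2 - 1) = s^2 by ring, Real.sqrt_sq hs0.le]
    ring
  have hC : 0 < v*(1+r)/Δ := by positivity
  refine ⟨sbar^2 - 1, by nlinarith, ?_, ?_⟩
  · apply strictMonoOn_of_deriv_pos (convex_Icc 0 (sbar^2 - 1))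
    · exact (Continuous.div_const (by fun_prop) Δ).continuousOn
    · intro x hx
      rw [interior_Icc] at hx
      rw [(hderiv x hx.1).deriv]
      have hs0 : 0 < Real.sqrt (1+x) := Real.sqrt_pos.mpr (by linarith [hx.1])
      have hslt : Real.sqrt (1+x) < sbar := by
        rw [Real.sqrt_lt' hsbar0]; linarith [hx.2]
      exact mul_pos hC (div_pos (hpos _ hs0 hslt) (by linarith))
  · apply strictAntiOn_of_deriv_neg (convex_Ici (sbar^2 - 1))
    · exact (Continuous.div_const (by fun_prop) Δ).continuousOn
    · intro x hx
      rw [interior_Ici] at hx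
      have hx0 : 0 < x := by nlinarith [Set.mem_Ioi.mp hx]
      rw [(hderiv x hx0).deriv]
      have hs0 : 0 < Real.sqrt (1+x) := Real.sqrt_pos.mpr (by linarith)
      have hslt : sbar < Real.sqrt (1+x) := by
        rw [show sbar = Real.sqrt (sbar^2) from (Real.sqrt_sq hsbar0.le).symm]
        exact Real.sqrt_lt_sqrt (by positivity) (by linarith [Set.mem_Ioi.mp hx])
      exact mul_neg_of_pos_of_neg hC (div_neg_of_neg_of_pos (hneg _ hslt) (by linarith))
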